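/- arXiv:2101.11136 — 6 statements merged into one kernel-verified Lean document; each statement's English description precedes it below -/
import Mathlib

section
/- Let k ≥ 2 and 0 ≤ r ≤ k-2 be integers. Then for every integer d with 1 ≤ d ≤ k, p(d, r) ≤ p(⌊(k+1)/(k-r)⌋, r); that is, the revealing probability d ↦ p(d, r) over d ∈ {1, …, k} is maximized at d = ⌊(k+1)/(k-r)⌋. Moreover, for r = k-1 the maximum is attained at d = k, where p(k, k-1) = 1. -/
/-- The revealing probability of an encoding symbol of degree `d` when `r` of the `k`
message symbols are known: `p(d, r) = (k - r) · C(r, d-1) / C(k, d)`. -/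
def revealProb (k d r : ℕ) : ℚ :=
  ((k : ℚ) - r) * (r.choose (d - 1)) / (k.choose d)

/-- The optimal degree `⌊(k+1)/(k-r)⌋` (floor of the rational division). -/
def optDeg (k r : ℕ) : ℕ :=
  ⌊((k : ℚ) + 1) / ((k : ℚ) - r)⌋₊

lemma optDeg_eq (k r : ℕ) (h : r ≤ k) : optDeg k r = (k + 1) / (k - r) := by
  unfold optDeg
  have h1 : ((k : ℚ) - r) = ((k - r : ℕ) : ℚ) := by
    push_cast [h]; ring
  have h2 : ((k : ℚ) + 1) = (((k + 1 : ℕ)) : ℚ) := by push_cast; ring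
  rw [h1, h2, Nat.floor_div_natCast, Nat.floor_natCast]

lemma nat_step_up (k r d : ℕ) (hd : 1 ≤ d) (hdk : d < k) (hr : r < k)
    (h : d * (k - r) ≤ r + 1) :
    r.choose (d - 1) * k.choose (d + 1) ≤ r.choose d * k.choose d := by
  obtain ⟨e, rfl⟩ : ∃ e, d = e + 1 := ⟨d - 1, by omega⟩
  simp only [Nat.add_sub_cancel]
  have hdr : e + 1 ≤ r + 1 := by
    have h1 : 1 ≤ k - r := by omega
    calc e + 1 = (e + 1) * 1 := by ring
      _ ≤ (e + 1) * (k - r) := Nat.mul_le_mul_left _ h1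
      _ ≤ r + 1 := h
  have key : (k - (e + 1)) * (e + 1) ≤ (r - e) * (e + 1 + 1) := by
    zify [show e + 1 ≤ k by omega, show e ≤ r by omega]
    have h' : (e + 1 : ℤ) * (k - r) ≤ r + 1 := by
      have := h; zify [show r ≤ k by omega] at this; linarith
    nlinarith
  have h2 : r.choose e * k.choose (e + 1 + 1) * ((e + 1) * (e + 1 + 1)) ≤
      r.choose (e + 1) * k.choose (e + 1) * ((e + 1) * (e + 1 + 1)) := by
    calc r.choose e * k.choose (e + 1 + 1) * ((e + 1) * (e + 1 + 1))
        = r.choose e * (k.choose (e + 1 + 1) * (e + 1 + 1)) * (e + 1) := by ring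
      _ = r.choose e * (k.choose (e + 1) * (k - (e + 1))) * (e + 1) := by
          rw [Nat.choose_succ_right_eq k (e + 1)]
      _ = (r.choose e * k.choose (e + 1)) * ((k - (e + 1)) * (e + 1)) := by ring
      _ ≤ (r.choose e * k.choose (e + 1)) * ((r - e) * (e + 1 + 1)) :=
          Nat.mul_le_mul_left _ key
      _ = (r.choose e * (r - e)) * k.choose (e + 1) * (e + 1 + 1) := by ring
      _ = (r.choose (e + 1) * (e + 1)) * k.choose (e + 1) * (e + 1 + 1) := by
          rw [Nat.choose_succ_right_eq r e]
      _ = r.choose (e + 1) * k.choose (e + 1) * ((e + 1) * (e + 1 + 1)) := by ring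
  exact Nat.le_of_mul_le_mul_right h2 (by positivity)

lemma nat_step_down (k r d : ℕ) (hd : 1 ≤ d) (hdk : d < k) (hr : r < k)
    (h : r + 1 ≤ d * (k - r)) :
    r.choose d * k.choose d ≤ r.choose (d - 1) * k.choose (d + 1) := by
  obtain ⟨e, rfl⟩ : ∃ e, d = e + 1 := ⟨d - 1, by omega⟩
  simp only [Nat.add_sub_cancel]
  by_cases hre : r < e + 1
  · rw [Nat.choose_eq_zero_of_lt hre]; simp
  push_neg at hre
  have key : (r - e) * (e + 1 + 1) ≤ (k - (e + 1)) * (e + 1) := by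
    zify [show e + 1 ≤ k by omega, show e ≤ r by omega]
    have h' : (r + 1 : ℤ) ≤ (e + 1) * (k - r) := by
      have := h; zify [show r ≤ k by omega] at this; linarith
    nlinarith
  have h2 : r.choose (e + 1) * k.choose (e + 1) * ((e + 1) * (e + 1 + 1)) ≤
      r.choose e * k.choose (e + 1 + 1) * ((e + 1) * (e + 1 + 1)) := by
    calc r.choose (e + 1) * k.choose (e + 1) * ((e + 1) * (e + 1 + 1))
        = (r.choose (e + 1) * (e + 1)) * k.choose (e + 1) * (e + 1 + 1) := by ring
      _ = (r.choose e * (r - e)) * k.choose (e + 1) * (e + 1 + 1) := by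
          rw [Nat.choose_succ_right_eq r e]
      _ = (r.choose e * k.choose (e + 1)) * ((r - e) * (e + 1 + 1)) := by ring
      _ ≤ (r.choose e * k.choose (e + 1)) * ((k - (e + 1)) * (e + 1)) :=
          Nat.mul_le_mul_left _ key
      _ = r.choose e * (k.choose (e + 1) * (k - (e + 1))) * (e + 1) := by ring
      _ = r.choose e * (k.choose (e + 1 + 1) * (e + 1 + 1)) * (e + 1) := by
          rw [Nat.choose_succ_right_eq k (e + 1)]
      _ = r.choose e * k.choose (e + 1 + 1) * ((e + 1) * (e + 1 + 1)) := by ring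
  exact Nat.le_of_mul_le_mul_right h2 (by positivity)

lemma step_up (k r d : ℕ) (hd : 1 ≤ d) (hdk : d < k) (hr : r < k)
    (h : d * (k - r) ≤ r + 1) : revealProb k d r ≤ revealProb k (d + 1) r := by
  unfold revealProb
  have hs : d + 1 - 1 = d := rfl
  rw [hs]
  have hc1 : (0 : ℚ) < k.choose d := by
    exact_mod_cast Nat.choose_pos hdk.le
  have hc2 : (0 : ℚ) < k.choose (d + 1) := by
    exact_mod_cast Nat.choose_pos hdk
  have hkr : (0 : ℚ) ≤ (k : ℚ) - r := by
    have : (r : ℚ) ≤ k := by exact_mod_cast hr.le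
    linarith
  rw [div_le_div_iff₀ hc1 hc2]
  have hnat := nat_step_up k r d hd hdk hr h
  have hq : ((r.choose (d - 1) : ℚ)) * (k.choose (d + 1)) ≤
      (r.choose d : ℚ) * (k.choose d) := by exact_mod_cast hnat
  calc ((k : ℚ) - r) * (r.choose (d - 1)) * (k.choose (d + 1))
      = ((k : ℚ) - r) * ((r.choose (d - 1)) * (k.choose (d + 1))) := by ring
    _ ≤ ((k : ℚ) - r) * ((r.choose d) * (k.choose d)) :=
        mul_le_mul_of_nonneg_left hq hkr
    _ = ((k : ℚ) - r) * (r.choose d) * (k.choose d) := by ring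

lemma step_down (k r d : ℕ) (hd : 1 ≤ d) (hdk : d < k) (hr : r < k)
    (h : r + 1 ≤ d * (k - r)) : revealProb k (d + 1) r ≤ revealProb k d r := by
  unfold revealProb
  have hs : d + 1 - 1 = d := rfl
  rw [hs]
  have hc1 : (0 : ℚ) < k.choose d := by
    exact_mod_cast Nat.choose_pos hdk.le
  have hc2 : (0 : ℚ) < k.choose (d + 1) := by
    exact_mod_cast Nat.choose_pos hdk
  have hkr : (0 : ℚ) ≤ (k : ℚ) - r := by
    have : (r : ℚ) ≤ k := by exact_mod_cast hr.le
    linarith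
  rw [div_le_div_iff₀ hc2 hc1]
  have hnat := nat_step_down k r d hd hdk hr h
  have hq : ((r.choose d : ℚ)) * (k.choose d) ≤
      (r.choose (d - 1) : ℚ) * (k.choose (d + 1)) := by exact_mod_cast hnat
  calc ((k : ℚ) - r) * (r.choose d) * (k.choose d)
      = ((k : ℚ) - r) * ((r.choose d) * (k.choose d)) := by ring
    _ ≤ ((k : ℚ) - r) * ((r.choose (d - 1)) * (k.choose (d + 1))) :=
        mul_le_mul_of_nonneg_left hq hkr
    _ = ((k : ℚ) - r) * (r.choose (d - 1)) * (k.choose (d + 1)) := by ring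

lemma chain_up (k r : ℕ) (hk : 2 ≤ k) (hr : r + 2 ≤ k) :
    ∀ m d : ℕ, 1 ≤ d → d + m = (k + 1) / (k - r) →
      revealProb k d r ≤ revealProb k ((k + 1) / (k - r)) r := by
  have hpos : 0 < k - r := by omega
  have hDq : (k + 1) / (k - r) = (r + 1) / (k - r) + 1 := by
    have : k + 1 = (r + 1) + (k - r) := by omega
    rw [this, Nat.add_div_right _ hpos]
  intro m
  induction m with
  | zero => intro d _ hD; rw [← hD]; simp
  | succ n ih =>
    intro d hd hD
    have hdk : d < k := by
      have hq : (r + 1) / (k - r) ≤ r + 1 := Nat.div_le_self _ _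
      omega
    have hle : d * (k - r) ≤ r + 1 := by
      have hdq : d ≤ (r + 1) / (k - r) := by omega
      exact (Nat.le_div_iff_mul_le hpos).mp hdq
    calc revealProb k d r ≤ revealProb k (d + 1) r :=
          step_up k r d hd hdk (by omega) hle
      _ ≤ revealProb k ((k + 1) / (k - r)) r := ih (d + 1) (by omega) (by omega)

lemma chain_down (k r : ℕ) (hk : 2 ≤ k) (hr : r + 2 ≤ k) :
    ∀ m d : ℕ, d = (k + 1) / (k - r) + m → d ≤ k →
      revealProb k d r ≤ revealProb k ((k + 1) / (k - r)) r := by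
  have hpos : 0 < k - r := by omega
  have hDq : (k + 1) / (k - r) = (r + 1) / (k - r) + 1 := by
    have : k + 1 = (r + 1) + (k - r) := by omega
    rw [this, Nat.add_div_right _ hpos]
  have hD1 : 1 ≤ (k + 1) / (k - r) := by rw [hDq]; exact Nat.le_add_left 1 _
  have hDlb : r + 1 < ((k + 1) / (k - r)) * (k - r) := by
    rw [hDq]
    calc r + 1 = (k - r) * ((r + 1) / (k - r)) + (r + 1) % (k - r) :=
          (Nat.div_add_mod _ _).symm
      _ < (k - r) * ((r + 1) / (k - r)) + (k - r) :=
          Nat.add_lt_add_left (Nat.mod_lt _ hpos) _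
      _ = ((r + 1) / (k - r) + 1) * (k - r) := by ring
  generalize (k + 1) / (k - r) = D at hD1 hDlb ⊢
  intro m
  induction m with
  | zero => intro d hD _; rw [hD]; simp
  | succ n ih =>
    intro d hD hdk
    obtain ⟨e, rfl⟩ : ∃ e, d = e + 1 := ⟨d - 1, by omega⟩
    have he1 : 1 ≤ e := by omega
    have hek : e < k := by omega
    have hstep : r + 1 ≤ e * (k - r) := by
      have hge : D * (k - r) ≤ e * (k - r) := Nat.mul_le_mul_right _ (by omega)
      omega
    calc revealProb k (e + 1) r ≤ revealProb k e r :=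
          step_down k r e he1 hek (by omega) hstep
      _ ≤ revealProb k D r := ih e (by omega) (by omega)

lemma reveal_last (k d : ℕ) (hk : 1 ≤ k) (hd : 1 ≤ d) (hdk : d ≤ k) :
    revealProb k d (k - 1) = (d : ℚ) / k := by
  unfold revealProb
  have h1 : (k : ℚ) - ((k - 1 : ℕ) : ℚ) = 1 := by
    push_cast [hk]; ring
  rw [h1, one_mul]
  have hid : k * (k - 1).choose (d - 1) = k.choose d * d := by
    have := Nat.add_one_mul_choose_eq (k - 1) (d - 1)
    have e1 : k - 1 + 1 = k := by omega
    have e2 : d - 1 + 1 = d := by omega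
    rwa [e1, e2] at this
  have hc : (0 : ℚ) < k.choose d := by exact_mod_cast Nat.choose_pos hdk
  have hkpos : (0 : ℚ) < k := by exact_mod_cast hk
  rw [div_eq_div_iff hc.ne' hkpos.ne']
  have : ((k * (k - 1).choose (d - 1) : ℕ) : ℚ) = ((k.choose d * d : ℕ) : ℚ) := by
    exact_mod_cast congrArg (Nat.cast : ℕ → ℚ) hid
  push_cast at this
  linarith

/-- For `k ≥ 2` and `0 ≤ r ≤ k-2`, the revealing probability `d ↦ p(d, r)` over
`d ∈ {1, …, k}` is maximized at `d = ⌊(k+1)/(k-r)⌋`.  Moreover, for `r = k-1` the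
maximum is attained at `d = k`, where `p(k, k-1) = 1`. -/
theorem optimal_degree_maximizes_revealing_probability (k : ℕ) (hk : 2 ≤ k) :
    (∀ r : ℕ, r ≤ k - 2 → ∀ d : ℕ, 1 ≤ d → d ≤ k →
      revealProb k d r ≤ revealProb k (optDeg k r) r) ∧
    (∀ d : ℕ, 1 ≤ d → d ≤ k → revealProb k d (k - 1) ≤ revealProb k k (k - 1)) ∧
    revealProb k k (k - 1) = 1 := by
  have hk1 : 1 ≤ k := by omega
  have hlast : revealProb k k (k - 1) = 1 := by
    rw [reveal_last k k hk1 hk1 le_rfl]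
    field_simp
  refine ⟨?_, ?_, hlast⟩
  · intro r hr d hd hdk
    have hr2 : r + 2 ≤ k := by omega
    rw [optDeg_eq k r (by omega)]
    rcases le_or_gt d ((k + 1) / (k - r)) with hle | hlt
    · exact chain_up k r hk hr2 ((k + 1) / (k - r) - d) d hd (by omega)
    · exact chain_down k r hk hr2 (d - (k + 1) / (k - r)) d (by omega) hdk
  · intro d hd hdk
    rw [reveal_last k d hk1 hd hdk, hlast]
    rw [div_le_one (by exact_mod_cast hk1)]
    exact_mod_cast hdk
end

section
/- Let γ be a real number with 0 < γ < 1 and let k ≥ 1 be an integer. Then the number of distinct values taken by the function r ↦ ⌊(k+1)/(k-r)⌋ as r ranges over the integers {0, 1, …, ⌊(1-γ)k⌋} is at most 2/γ. Consequently, in the (1-γ)-truncated real-time oblivious protocol the receiver needs to send at most 2/γ feedback messages, since a feedback message is sent only when this value changes. -/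
/-- For `0 < γ < 1` and `k ≥ 1`, the number of distinct values taken by
`r ↦ ⌊(k+1)/(k-r)⌋` as `r` ranges over `{0, 1, …, ⌊(1-γ)k⌋}` is at most `2/γ`.
Consequently, in the `(1-γ)`-truncated real-time oblivious protocol the receiver
sends at most `2/γ` feedback messages. -/
theorem number_of_feedback_messages_le_two_div_gamma
    (γ : ℝ) (hγ0 : 0 < γ) (hγ1 : γ < 1) (k : ℕ) (hk : 1 ≤ k) :
    (((Finset.range (⌊(1 - γ) * k⌋₊ + 1)).image
        (fun r : ℕ => ⌊((k : ℝ) + 1) / ((k : ℝ) - r)⌋)).card : ℝ) ≤ 2 / γ := by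
  set m := ⌊(1 - γ) * k⌋₊ with hm
  have hk1 : (1:ℝ) ≤ (k:ℝ) := by exact_mod_cast hk
  have hmk : (m : ℝ) ≤ (1 - γ) * k :=
    Nat.floor_le (mul_nonneg (by linarith) (by positivity))
  have hsubset : ((Finset.range (m + 1)).image
      (fun r : ℕ => ⌊((k : ℝ) + 1) / ((k : ℝ) - r)⌋)) ⊆ Finset.Icc (1:ℤ) ⌊2/γ⌋ := by
    apply Finset.image_subset_iff.mpr
    intro r hr
    simp only [Finset.mem_range, Nat.lt_succ_iff] at hr
    have hrR : (r:ℝ) ≤ (1 - γ) * k := le_trans (by exact_mod_cast hr) hmk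
    have hd : γ * k ≤ (k:ℝ) - r := by linarith
    have hdpos : (0:ℝ) < (k:ℝ) - r := lt_of_lt_of_le (by nlinarith) hd
    simp only [Finset.mem_Icc]
    constructor
    · refine Int.le_floor.mpr ?_
      rw [Int.cast_one, le_div_iff₀ hdpos]
      have : (0:ℝ) ≤ (r:ℝ) := Nat.cast_nonneg r
      linarith
    · apply Int.floor_le_floor
      rw [div_le_div_iff₀ hdpos hγ0]
      nlinarith
  have hcard := Finset.card_le_card hsubset
  have hcard2 : ((Finset.range (m + 1)).image
      (fun r : ℕ => ⌊((k : ℝ) + 1) / ((k : ℝ) - r)⌋)).card ≤ ⌊2/γ⌋.toNat := by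
    calc _ ≤ (Finset.Icc (1:ℤ) ⌊2/γ⌋).card := hcard
    _ = (⌊2/γ⌋ + 1 - 1).toNat := Int.card_Icc 1 ⌊2/γ⌋
    _ = ⌊2/γ⌋.toNat := by ring_nf
  have htn : ((⌊2/γ⌋.toNat : ℕ) : ℝ) ≤ 2/γ := by
    rw [Int.floor_toNat]
    exact Nat.floor_le (by positivity)
  calc (((Finset.range (m + 1)).image
      (fun r : ℕ => ⌊((k : ℝ) + 1) / ((k : ℝ) - r)⌋)).card : ℝ)
      ≤ ((⌊2/γ⌋.toNat : ℕ) : ℝ) := by exact_mod_cast hcard2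
    _ ≤ 2/γ := htn
end

section
/- Let γ be a real number with 0 < γ < 1 and let k be a positive integer with γ·k ≥ 1. Then the sum over integers r from 0 to ⌊(1-γ)k⌋ of ⌊(k+1)/(k-r)⌋ satisfies ∑_{r=0}^{⌊(1-γ)k⌋} ⌊(k+1)/(k-r)⌋ ≤ (k+1)·(log(1/γ) + 1), where log denotes the natural logarithm. -/
/-- Harmonic tail bound: `∑_{j=n}^{k} 1/j ≤ 1/n + log k - log n`. -/
lemma harmonic_Icc_le (n : ℕ) (hn : 1 ≤ n) :
    ∀ k : ℕ, n ≤ k →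
      ∑ j ∈ Finset.Icc n k, (1 : ℝ) / j ≤ 1 / n + Real.log k - Real.log n := by
  intro k hk
  induction k, hk using Nat.le_induction with
  | base => simp
  | succ k hk ih =>
    rw [Finset.sum_Icc_succ_top (by omega)]
    have hk1 : (1 : ℝ) ≤ (k : ℝ) := by exact_mod_cast le_trans hn hk
    have hkpos : (0 : ℝ) < k := by linarith
    have hkspos : (0 : ℝ) < (k : ℝ) + 1 := by linarith
    have hlog : Real.log ((k : ℝ) / ((k : ℝ) + 1)) ≤ (k : ℝ) / ((k : ℝ) + 1) - 1 :=
      Real.log_le_sub_one_of_pos (by positivity)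
    have hdiv : Real.log ((k : ℝ) / ((k : ℝ) + 1)) = Real.log k - Real.log ((k : ℝ) + 1) :=
      Real.log_div (ne_of_gt hkpos) (ne_of_gt hkspos)
    have h1 : (1 : ℝ) / ((k : ℝ) + 1) ≤ Real.log ((k : ℝ) + 1) - Real.log k := by
      rw [hdiv] at hlog
      have : (k : ℝ) / ((k : ℝ) + 1) - 1 = -(1 / ((k : ℝ) + 1)) := by
        field_simp; ring
      linarith [hlog, this ▸ hlog]
    push_cast
    linarith

/-- For `0 < γ < 1`, `k ≥ 1` and `γ·k ≥ 1`, the sum of the optimal encoding degrees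
satisfies `∑_{r=0}^{⌊(1-γ)k⌋} ⌊(k+1)/(k-r)⌋ ≤ (k+1)·(log(1/γ) + 1)`. -/
theorem sum_optimal_degrees_le
    (γ : ℝ) (hγ0 : 0 < γ) (hγ1 : γ < 1) (k : ℕ) (hk : 1 ≤ k) (hγk : 1 ≤ γ * k) :
    ∑ r ∈ Finset.range (⌊(1 - γ) * k⌋₊ + 1),
        ((⌊((k : ℝ) + 1) / ((k : ℝ) - r)⌋ : ℤ) : ℝ)
      ≤ ((k : ℝ) + 1) * (Real.log (1 / γ) + 1) := by
  set m := ⌊(1 - γ) * k⌋₊ with hm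
  have hkpos : (0 : ℝ) < k := by exact_mod_cast hk
  have hmle : (m : ℝ) ≤ (1 - γ) * k := Nat.floor_le (by nlinarith)
  have hmk : m < k := by
    by_contra h
    push_neg at h
    have : (k : ℝ) ≤ (m : ℝ) := by exact_mod_cast h
    nlinarith
  set n := k - m with hn
  have hn1 : 1 ≤ n := by omega
  have hnk : n ≤ k := by omega
  have hncast : (n : ℝ) = (k : ℝ) - m := by
    rw [hn]; push_cast [Nat.cast_sub (le_of_lt hmk)]; ring
  have hnγ : γ * k ≤ (n : ℝ) := by rw [hncast]; nlinarith
  have hnpos : (0 : ℝ) < n := by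
    have : (1 : ℝ) ≤ n := by exact_mod_cast hn1
    linarith
  -- each term r ≤ m gives k - r ≥ n ≥ 1 > 0
  have hstep1 : ∑ r ∈ Finset.range (m + 1),
      ((⌊((k : ℝ) + 1) / ((k : ℝ) - r)⌋ : ℤ) : ℝ)
      ≤ ((k : ℝ) + 1) * ∑ r ∈ Finset.range (m + 1), 1 / ((k : ℝ) - r) := by
    rw [Finset.mul_sum]
    apply Finset.sum_le_sum
    intro r hr
    have hrm : r ≤ m := Nat.lt_succ_iff.mp (Finset.mem_range.mp hr)
    have hrk : (r : ℝ) ≤ (m : ℝ) := by exact_mod_cast hrm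
    have hpos : (0 : ℝ) < (k : ℝ) - r := by
      have : (m : ℝ) < k := by exact_mod_cast hmk
      linarith
    calc ((⌊((k : ℝ) + 1) / ((k : ℝ) - r)⌋ : ℤ) : ℝ)
        ≤ ((k : ℝ) + 1) / ((k : ℝ) - r) := Int.floor_le _
      _ = ((k : ℝ) + 1) * (1 / ((k : ℝ) - r)) := by ring
  -- reindex
  have hstep2 : ∑ r ∈ Finset.range (m + 1), 1 / ((k : ℝ) - r)
      = ∑ j ∈ Finset.Icc n k, (1 : ℝ) / j := by
    apply Finset.sum_nbij' (fun r => k - r) (fun j => k - j)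
    · intro r hr
      have := Nat.lt_succ_iff.mp (Finset.mem_range.mp hr)
      simp only [Finset.mem_Icc]; omega
    · intro j hj
      simp only [Finset.mem_Icc] at hj
      simp only [Finset.mem_range]; omega
    · intro r hr
      have := Nat.lt_succ_iff.mp (Finset.mem_range.mp hr)
      omega
    · intro j hj
      simp only [Finset.mem_Icc] at hj
      omega
    · intro r hr
      have hrm := Nat.lt_succ_iff.mp (Finset.mem_range.mp hr)
      have hrk : r ≤ k := by omega
      rw [Nat.cast_sub hrk]
  rw [hstep2] at hstep1
  have hharm := harmonic_Icc_le n hn1 k hnk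
  have hlogs : Real.log k - Real.log n ≤ Real.log (1 / γ) := by
    have h1 : Real.log (γ * k) ≤ Real.log n := Real.log_le_log (by positivity) hnγ
    have h2 : Real.log (γ * k) = Real.log γ + Real.log k :=
      Real.log_mul (ne_of_gt hγ0) (ne_of_gt hkpos)
    have h3 : Real.log (1 / γ) = -Real.log γ := by
      rw [one_div, Real.log_inv]
    linarith
  have hinv : 1 / (n : ℝ) ≤ 1 := by
    rw [div_le_one hnpos]
    exact_mod_cast hn1
  have : ∑ j ∈ Finset.Icc n k, (1 : ℝ) / j ≤ Real.log (1 / γ) + 1 := by linarith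
  calc ∑ r ∈ Finset.range (m + 1), ((⌊((k : ℝ) + 1) / ((k : ℝ) - r)⌋ : ℤ) : ℝ)
      ≤ ((k : ℝ) + 1) * ∑ j ∈ Finset.Icc n k, (1 : ℝ) / j := hstep1
    _ ≤ ((k : ℝ) + 1) * (Real.log (1 / γ) + 1) := by
        apply mul_le_mul_of_nonneg_left this (by linarith)
end

section
/- Let k ≥ 11 be an integer and let γ be a real number with 1/e ≤ γ < 1, where e is Euler's number. Then ∑_{r=0}^{⌊k-γk⌋} k/(k-r) ≤ k + 4e + 1/2, where the sum is over integers r and the division is over the reals. -/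
lemma one_div_le_log_sub_log {y : ℝ} (hy : 1 < y) :
    1 / y ≤ Real.log y - Real.log (y - 1) := by
  have h := Real.log_le_sub_one_of_pos (show 0 < (y-1)/y from div_pos (by linarith) (by linarith))
  rw [Real.log_div (by linarith) (by linarith)] at h
  have h2 : (y-1)/y - 1 = -(1/y) := by field_simp; ring
  linarith

/-- For `k ≥ 11` and `1/e ≤ γ < 1`: `∑_{r=0}^{⌊k-γk⌋} k/(k-r) ≤ k + 4e + 1/2`. -/
theorem sum_expected_symbols_large_gamma
    (k : ℕ) (hk : 11 ≤ k) (γ : ℝ) (hγe : 1 / Real.exp 1 ≤ γ) (hγ1 : γ < 1) :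
    ∑ r ∈ Finset.range (⌊(k : ℝ) - γ * k⌋₊ + 1), (k : ℝ) / ((k : ℝ) - r)
      ≤ (k : ℝ) + 4 * Real.exp 1 + 1 / 2 := by
  set K : ℝ := (k : ℝ) with hKdef
  set m : ℕ := ⌊K - γ * K⌋₊ with hm
  have hK : (11:ℝ) ≤ K := by rw [hKdef]; exact_mod_cast hk
  have hK0 : (0:ℝ) < K := by linarith
  have he : (0:ℝ) < Real.exp 1 := Real.exp_pos 1
  have he3 : Real.exp 1 ≤ 3 := by
    have := Real.exp_one_lt_d9; linarith
  have hγ0 : 0 < γ := lt_of_lt_of_le (by positivity) hγe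
  have hmle : (m : ℝ) ≤ K - γ * K := Nat.floor_le (by nlinarith)
  have hγK : γ * K ≤ K - m := by linarith
  have hγe' : 1 ≤ γ * Real.exp 1 := by rwa [div_le_iff₀ he] at hγe
  have hKe : K / Real.exp 1 ≤ γ * K := by
    rw [div_le_iff₀ he]
    nlinarith [mul_le_mul_of_nonneg_left hγe' hK0.le]
  have hKm : 0 < K - m := lt_of_lt_of_le (by positivity) (hKe.trans hγK)
  have hKme : K / (K - m) ≤ Real.exp 1 := by
    have h' : K / Real.exp 1 ≤ K - m := hKe.trans hγK
    rw [div_le_iff₀ he] at h'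
    rw [div_le_iff₀ hKm, mul_comm]
    exact h'
  rw [Finset.sum_range_succ]
  have hmain : ∑ r ∈ Finset.range m, K / (K - r) ≤ K := by
    have hstep : ∀ r ∈ Finset.range m, K / (K - r)
        ≤ K * (Real.log (K - r) - Real.log (K - (r+1 : ℕ))) := by
      intro r hr
      have hrm : (r : ℝ) + 1 ≤ m := by
        have : r + 1 ≤ m := Finset.mem_range.1 hr
        exact_mod_cast this
      have h1 : 1 < K - r := by
        have : (1:ℝ) < K - m + 1 := by nlinarith [hKe.trans hγK, Real.exp_pos 1, he3]
        -- K - m ≥ K/e ≥ 11/3 > 1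
        nlinarith [hKe.trans hγK, he3, Real.exp_pos 1]
      have hcast : (K - ((r:ℝ)+1)) = (K - r) - 1 := by ring
      push_cast
      rw [hcast]
      have := one_div_le_log_sub_log h1
      have hKr : 0 < K - r := by linarith
      calc K / (K - r) = K * (1 / (K - r)) := by ring
      _ ≤ K * (Real.log (K - r) - Real.log (K - r - 1)) := by
          apply mul_le_mul_of_nonneg_left this hK0.le
    calc ∑ r ∈ Finset.range m, K / (K - r)
        ≤ ∑ r ∈ Finset.range m, K * (Real.log (K - r) - Real.log (K - (r+1 : ℕ))) :=
          Finset.sum_le_sum hstep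
      _ = K * ∑ r ∈ Finset.range m, (Real.log (K - r) - Real.log (K - (r+1 : ℕ))) := by
          rw [Finset.mul_sum]
      _ = K * (Real.log (K - (0:ℕ)) - Real.log (K - m)) := by
          rw [Finset.sum_range_sub' (fun i => Real.log (K - i))]
      _ = K * (Real.log K - Real.log (K - m)) := by norm_num
      _ ≤ K * 1 := by
          apply mul_le_mul_of_nonneg_left _ hK0.le
          rw [← Real.log_div (by positivity) (by positivity)]
          have := Real.log_le_log (by positivity) hKme
          simpa using this.trans_eq (Real.log_exp 1)
      _ = K := mul_one K
  linarith
end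

section
/- Let k ≥ 11 be an integer, let e be Euler's number, and let γ be a real number with 0 < γ < 1/e and γ·k ≥ 1. Then ∑_{r=0}^{⌊k - k/e⌋} k/(k-r) + e·(⌊(1-γ)k⌋ - ⌊k - k/e⌋) ≤ 2k - e·γ·k + 6e, where the sum is over integers r and all divisions are over the reals. -/
lemma inv_le_log_sub_log_aux {x : ℝ} (hx : 2 ≤ x) :
    1 / x ≤ Real.log x - Real.log (x - 1) := by
  have hx0 : 0 < x := by linarith
  have hx1 : 0 < x - 1 := by linarith
  have h := Real.log_le_sub_one_of_pos (x := (x - 1) / x) (by positivity)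
  rw [Real.log_div (by linarith) (ne_of_gt hx0)] at h
  have h2 : (x - 1) / x - 1 = -(1 / x) := by field_simp; ring
  rw [h2] at h
  linarith

lemma sum_harmonic_le_aux (k : ℕ) : ∀ n : ℕ, n + 1 ≤ k →
    ∑ r ∈ Finset.range n, (k : ℝ) / ((k : ℝ) - r)
      ≤ (k : ℝ) * (Real.log k - Real.log ((k : ℝ) - n)) := by
  intro n
  induction n with
  | zero => intro _; simp
  | succ n ih =>
    intro hn
    have hn' : n + 1 ≤ k := by omega
    have ih' := ih hn'
    rw [Finset.sum_range_succ]
    have hx : (2 : ℝ) ≤ (k : ℝ) - n := by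
      have : ((n : ℝ) + 2) ≤ (k : ℝ) := by exact_mod_cast hn
      linarith
    have h1 := inv_le_log_sub_log_aux hx
    have hk0 : (0 : ℝ) ≤ (k : ℝ) := Nat.cast_nonneg k
    have h2 : (k : ℝ) / ((k : ℝ) - n)
        ≤ (k : ℝ) * (Real.log ((k : ℝ) - n) - Real.log ((k : ℝ) - n - 1)) := by
      rw [div_eq_mul_one_div]
      exact mul_le_mul_of_nonneg_left h1 hk0
    have h3 : ((k : ℝ) - ((n : ℕ) + 1 : ℕ)) = (k : ℝ) - n - 1 := by push_cast; ring
    rw [h3]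
    nlinarith [h2, ih']

set_option maxHeartbeats 1000000 in
/-- For `k ≥ 11` and `0 < γ < 1/e` with `γ·k ≥ 1`:
`∑_{r=0}^{⌊k - k/e⌋} k/(k-r) + e·(⌊(1-γ)k⌋ - ⌊k - k/e⌋) ≤ 2k - e·γ·k + 6e`. -/
theorem sum_expected_symbols_small_gamma
    (k : ℕ) (hk : 11 ≤ k) (γ : ℝ) (hγ0 : 0 < γ) (hγe : γ < 1 / Real.exp 1)
    (hγk : 1 ≤ γ * k) :
    ∑ r ∈ Finset.range (⌊(k : ℝ) - k / Real.exp 1⌋₊ + 1), (k : ℝ) / ((k : ℝ) - r)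
        + Real.exp 1 * ((⌊(1 - γ) * k⌋₊ : ℝ) - (⌊(k : ℝ) - k / Real.exp 1⌋₊ : ℝ))
      ≤ 2 * k - Real.exp 1 * γ * k + 6 * Real.exp 1 := by
  have hE1 : Real.exp 1 < 2.7182818286 := Real.exp_one_lt_d9
  have hE2 : (2.7182818283 : ℝ) < Real.exp 1 := Real.exp_one_gt_d9
  set E := Real.exp 1 with hE
  have hE0 : (0 : ℝ) < E := by linarith
  have hK : (11 : ℝ) ≤ (k : ℝ) := by exact_mod_cast hk
  have hKE : E < (k : ℝ) := by linarith
  have hKEpos : (0 : ℝ) < (k : ℝ) - E := by linarith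
  -- k/E > 4
  have hKE4 : (4 : ℝ) < (k : ℝ) / E := by
    rw [lt_div_iff₀ hE0]; nlinarith
  have hKEle : (k : ℝ) / E ≤ (k : ℝ) := by
    apply div_le_self (by linarith) (by linarith)
  have hnonneg : (0 : ℝ) ≤ (k : ℝ) - (k : ℝ) / E := by linarith
  set m := ⌊(k : ℝ) - (k : ℝ) / E⌋₊ with hm
  have hfl : (m : ℝ) ≤ (k : ℝ) - (k : ℝ) / E := Nat.floor_le hnonneg
  have hfl2 : (k : ℝ) - (k : ℝ) / E < (m : ℝ) + 1 := Nat.lt_floor_add_one _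
  -- m + 2 ≤ k
  have hm2 : m + 2 ≤ k := by
    have : ((m : ℝ) + 2) ≤ (k : ℝ) := by linarith
    exact_mod_cast this
  -- sum bound
  have hsum := sum_harmonic_le_aux k (m + 1) (by omega)
  have hKm1 : (k : ℝ) - ((m : ℕ) + 1 : ℕ) = (k : ℝ) - (m : ℝ) - 1 := by push_cast; ring
  rw [hKm1] at hsum
  -- K - m - 1 ≥ K/E - 1 > 0
  have hpos1 : (0 : ℝ) < (k : ℝ) / E - 1 := by linarith
  have hge : (k : ℝ) / E - 1 ≤ (k : ℝ) - (m : ℝ) - 1 := by linarith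
  have hlogmono : Real.log ((k : ℝ) / E - 1) ≤ Real.log ((k : ℝ) - (m : ℝ) - 1) :=
    Real.log_le_log (by linarith) hge
  -- log(K/E - 1) = log(K - E) - 1
  have hdiv : (k : ℝ) / E - 1 = ((k : ℝ) - E) / E := by field_simp
  have hlogE : Real.log E = 1 := Real.log_exp 1
  have hlog1 : Real.log ((k : ℝ) / E - 1) = Real.log ((k : ℝ) - E) - 1 := by
    rw [hdiv, Real.log_div (ne_of_gt hKEpos) (ne_of_gt hE0), hlogE]
  -- log K - log (K - E) ≤ E / (K - E)
  have hlog2 : Real.log (k : ℝ) - Real.log ((k : ℝ) - E) ≤ E / ((k : ℝ) - E) := by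
    have h := Real.log_le_sub_one_of_pos (x := (k : ℝ) / ((k : ℝ) - E)) (by positivity)
    rw [Real.log_div (by linarith) (ne_of_gt hKEpos)] at h
    have : (k : ℝ) / ((k : ℝ) - E) - 1 = E / ((k : ℝ) - E) := by field_simp; ring
    linarith [this ▸ h]
  -- K * E / (K - E) ≤ 5 * E
  have hfrac : (k : ℝ) * (E / ((k : ℝ) - E)) ≤ 5 * E := by
    rw [mul_div_assoc', div_le_iff₀ hKEpos]
    nlinarith
  have hk0 : (0 : ℝ) ≤ (k : ℝ) := Nat.cast_nonneg k
  have hsum3 : ∑ r ∈ Finset.range (m + 1), (k : ℝ) / ((k : ℝ) - r) ≤ (k : ℝ) + 5 * E := by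
    have hA : (k : ℝ) * (Real.log (k : ℝ) - Real.log ((k : ℝ) / E - 1)) ≤ (k : ℝ) + 5 * E := by
      calc (k : ℝ) * (Real.log (k : ℝ) - Real.log ((k : ℝ) / E - 1))
          = (k : ℝ) * (Real.log (k : ℝ) - Real.log ((k : ℝ) - E)) + (k : ℝ) := by
            rw [hlog1]; ring
        _ ≤ (k : ℝ) * (E / ((k : ℝ) - E)) + (k : ℝ) := by
            linarith [mul_le_mul_of_nonneg_left hlog2 hk0]
        _ ≤ (k : ℝ) + 5 * E := by linarith [hfrac]
    have hB : (k : ℝ) * (Real.log (k : ℝ) - Real.log ((k : ℝ) - (m : ℝ) - 1))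
        ≤ (k : ℝ) * (Real.log (k : ℝ) - Real.log ((k : ℝ) / E - 1)) :=
      mul_le_mul_of_nonneg_left (by linarith) hk0
    linarith [hsum]
  -- second term
  have hγ1 : γ < 1 := by
    have : 1 / E < 1 := by rw [div_lt_one hE0]; linarith
    linarith
  have hfl3 : (⌊(1 - γ) * (k : ℝ)⌋₊ : ℝ) ≤ (1 - γ) * (k : ℝ) :=
    Nat.floor_le (by nlinarith)
  have hEdivK : E * ((k : ℝ) / E) = (k : ℝ) := by field_simp
  have hsecond : E * ((⌊(1 - γ) * (k : ℝ)⌋₊ : ℝ) - (m : ℝ))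
      ≤ -(E * γ * (k : ℝ)) + (k : ℝ) + E := by
    have h1 : (⌊(1 - γ) * (k : ℝ)⌋₊ : ℝ) - (m : ℝ) ≤ (1 - γ) * (k : ℝ) - ((k : ℝ) - (k : ℝ) / E - 1) := by
      linarith
    have h2 := mul_le_mul_of_nonneg_left h1 (le_of_lt hE0)
    calc E * ((⌊(1 - γ) * (k : ℝ)⌋₊ : ℝ) - (m : ℝ))
        ≤ E * ((1 - γ) * (k : ℝ) - ((k : ℝ) - (k : ℝ) / E - 1)) := h2
      _ = -(E * γ * (k : ℝ)) + E * ((k : ℝ) / E) + E := by ring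
      _ = -(E * γ * (k : ℝ)) + (k : ℝ) + E := by rw [hEdivK]
  linarith [hsum3, hsecond]
end

section
/- Let k ≥ 2 and 0 ≤ r ≤ k-2 be integers, and let d(r) = ⌊(k+1)/(k-r)⌋. Then the revealing probability at the optimal degree satisfies p(d(r), r) ≥ (k-r)/k; equivalently, (k-r)·C(r, d(r)-1)/C(k, d(r)) ≥ (k-r)/k. -/
lemma nat_step (k r d : ℕ) (hd : 1 ≤ d) (hdr : d ≤ r) (hrk : r ≤ k)
    (h : d * (k - r) ≤ r + 1) :
    r.choose (d-1) * k.choose (d+1) ≤ r.choose d * k.choose d := by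
  have hd1 : d - 1 + 1 = d := by omega
  have h1 : r.choose d * d = r.choose (d-1) * (r - (d-1)) := by
    have := Nat.choose_succ_right_eq r (d-1)
    rwa [hd1] at this
  have h2 : k.choose (d+1) * (d+1) = k.choose d * (k - d) := Nat.choose_succ_right_eq k d
  have key : (k - d) * d ≤ (r - (d-1)) * (d+1) := by
    have hdk : d ≤ k := hdr.trans hrk
    have hd1r : d - 1 ≤ r := by omega
    zify [hdk, hd1r, hrk, hd] at *
    nlinarith [h]
  have hM : 0 < d * (d+1) := by positivity
  apply Nat.le_of_mul_le_mul_right _ hM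
  have e1 : r.choose (d-1) * k.choose (d+1) * (d*(d+1))
      = (r.choose (d-1) * k.choose d) * ((k - d) * d) := by
    rw [show r.choose (d-1) * k.choose (d+1) * (d*(d+1))
        = (k.choose (d+1) * (d+1)) * (r.choose (d-1) * d) from by ring, h2]
    ring
  have e2 : r.choose d * k.choose d * (d*(d+1))
      = (r.choose (d-1) * k.choose d) * ((r - (d-1)) * (d+1)) := by
    rw [show r.choose d * k.choose d * (d*(d+1))
        = (r.choose d * d) * (k.choose d * (d+1)) from by ring, h1]
    ring
  rw [e1, e2]
  exact Nat.mul_le_mul_left _ key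

lemma q_step (k r d : ℕ) (hd : 1 ≤ d) (hdr : d ≤ r) (hrk : r + 2 ≤ k)
    (h : d * (k - r) ≤ r + 1) :
    revealProb k d r ≤ revealProb k (d+1) r := by
  unfold revealProb
  have hpos1 : (0:ℚ) < (k.choose d : ℚ) :=
    Nat.cast_pos.mpr (Nat.choose_pos (by omega))
  have hpos2 : (0:ℚ) < (k.choose (d+1) : ℚ) :=
    Nat.cast_pos.mpr (Nat.choose_pos (by omega))
  rw [div_le_div_iff₀ hpos1 hpos2]
  have hcast : ((k:ℚ) - r) = ((k - r : ℕ) : ℚ) := by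
    rw [Nat.cast_sub (by omega : r ≤ k)]
  rw [hcast]
  simp only [Nat.add_sub_cancel]
  have hle := Nat.mul_le_mul_left (k - r) (nat_step k r d hd hdr (by omega) h)
  rw [mul_assoc, mul_assoc]
  exact_mod_cast hle

/-- For `k ≥ 2` and `0 ≤ r ≤ k-2`, the revealing probability at the optimal degree
`d(r) = ⌊(k+1)/(k-r)⌋` satisfies `p(d(r), r) ≥ (k-r)/k`. -/
theorem revealing_probability_at_optimal_degree_ge_degree_one
    (k r : ℕ) (hk : 2 ≤ k) (hr : r ≤ k - 2) :
    ((k : ℚ) - r) / k ≤ revealProb k (optDeg k r) r := by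
  have hm : 2 ≤ k - r := by omega
  have hrk : r ≤ k := by omega
  have hD : optDeg k r = (k+1) / (k-r) := by
    unfold optDeg
    rw [show ((k:ℚ)+1) = ((k+1:ℕ):ℚ) from by push_cast; ring,
        show ((k:ℚ) - r) = ((k-r:ℕ):ℚ) from (Nat.cast_sub hrk).symm,
        Nat.floor_div_natCast]
    rw [Nat.floor_natCast]
  have hD1 : 1 ≤ optDeg k r := by
    rw [hD]
    exact (Nat.one_le_div_iff (by omega)).mpr (by omega)
  have hDle : optDeg k r * (k - r) ≤ k + 1 := by
    rw [hD]; exact Nat.div_mul_le_self _ _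
  have claim : ∀ d, 1 ≤ d → d ≤ optDeg k r → ((k:ℚ) - r) / k ≤ revealProb k d r := by
    intro d
    induction d with
    | zero => omega
    | succ d ih =>
      intro _ h2
      rcases Nat.eq_zero_or_pos d with h0 | hd
      · subst h0
        apply le_of_eq
        unfold revealProb
        simp [Nat.choose_one_right]
      · have hA : (d+1) * (k-r) ≤ k + 1 :=
          le_trans (Nat.mul_le_mul_right _ h2) hDle
        rw [Nat.succ_mul] at hA
        have hB : d * (k-r) ≤ r + 1 := by
          set x := d * (k - r) with hx
          omega
        have h2d : d * 2 ≤ r + 1 := le_trans (Nat.mul_le_mul_left d hm) hB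
        have hdr : d ≤ r := by omega
        exact le_trans (ih hd (by omega)) (q_step k r d hd hdr (by omega) hB)
  exact claim (optDeg k r) hD1 le_rfl
end
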